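/- For every integer n ≥ 3, the number of distinct maximal independent sets of the cycle graph on n vertices equals the n-th Perrin number. -/

import Mathlib

/-- `W` is a maximal independent set of the graph `G`. -/
def MaxIndepSet {V : Type} (G : SimpleGraph V) (W : Set V) : Prop :=
  (∀ ⦃v⦄, v ∈ W → ∀ ⦃w⦄, w ∈ W → ¬ G.Adj v w) ∧
  ∀ W' : Set V, (∀ ⦃v⦄, v ∈ W' → ∀ ⦃w⦄, w ∈ W' → ¬ G.Adj v w) → W ⊆ W' → W' = W

/-- The Perrin numbers: P 0 = 3, P 1 = 0, P 2 = 2, P (n+3) = P (n+1) + P n. -/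
def perrin : ℕ → ℕ
  | 0 => 3
  | 1 => 0
  | 2 => 2
  | (n + 3) => perrin (n + 1) + perrin n

/-- The cycle graph on `n` vertices: vertices `i`, `j` are adjacent exactly when they
differ by 1 modulo `n`. -/
def cycleGraph (n : ℕ) : SimpleGraph (ZMod n) :=
  SimpleGraph.fromRel (fun i j => i = j + 1)

/-! ### Transfer-matrix counting machinery -/

abbrev S8 : Type := {p : Bool × Bool // p ≠ (true, true)}

def Rel8 (a b : S8) : Prop :=
  a.1.2 = b.1.1 ∧ ¬(a.1.1 = false ∧ a.1.2 = false ∧ b.1.2 = false)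

instance : DecidableRel Rel8 := fun a b => by unfold Rel8; infer_instance

def pcount : ℕ → S8 → S8 → ℕ
  | 0, s, t => if s = t then 1 else 0
  | (k+1), s, t => ∑ u : S8, pcount k s u * (if Rel8 u t then 1 else 0)

def ccount (n : ℕ) : ℕ := ∑ s : S8, pcount n s s

lemma pcount_rec : ∀ k s t, pcount (k+3) s t = pcount (k+1) s t + pcount k s t := by
  intro k
  induction k with
  | zero => decide
  | succ k ih =>
    intro s t
    show (∑ u : S8, pcount (k+3) s u * _) = (∑ u : S8, pcount (k+1) s u * _) + (∑ u : S8, pcount k s u * _)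
    rw [← Finset.sum_add_distrib]
    refine Finset.sum_congr rfl fun u _ => ?_
    rw [ih s u, add_mul]

lemma ccount_rec (k : ℕ) : ccount (k+3) = ccount (k+1) + ccount k := by
  unfold ccount
  rw [← Finset.sum_add_distrib]
  exact Finset.sum_congr rfl fun s _ => pcount_rec k s s

lemma ccount_eq_perrin : ∀ n, ccount n = perrin n
  | 0 => by decide
  | 1 => by decide
  | 2 => by decide
  | (n+3) => by
    rw [ccount_rec, show perrin (n+3) = perrin (n+1) + perrin n from rfl,
      ccount_eq_perrin (n+1), ccount_eq_perrin n]

/-! ### Paths -/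

def Q8 (k : ℕ) (s t : S8) : Type :=
  {g : Fin (k+1) → S8 // g 0 = s ∧ g (Fin.last k) = t ∧
    ∀ i : Fin k, Rel8 (g i.castSucc) (g i.succ)}

instance (k : ℕ) (s t : S8) : Finite (Q8 k s t) := by unfold Q8; infer_instance

lemma natCard_sigma {ι : Type*} [Fintype ι] (β : ι → Type*) [∀ i, Finite (β i)] :
    Nat.card (Σ i, β i) = ∑ i, Nat.card (β i) := by
  letI : ∀ i, Fintype (β i) := fun i => Fintype.ofFinite _
  simp [Nat.card_eq_fintype_card, Fintype.card_sigma]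

lemma card_plift_prop (P : Prop) [Decidable P] :
    Nat.card (PLift P) = if P then 1 else 0 := by
  by_cases h : P
  · rw [if_pos h]
    haveI : Nonempty (PLift P) := ⟨⟨h⟩⟩
    exact Nat.card_unique
  · rw [if_neg h]
    haveI : IsEmpty (PLift P) := ⟨fun x => h x.down⟩
    exact Nat.card_of_isEmpty

def Q8succEquiv (k : ℕ) (s t u : S8) :
    {g : Q8 (k+1) s t // g.1 ((Fin.last k).castSucc) = u} ≃ Q8 k s u × PLift (Rel8 u t) where
  toFun g :=
    ⟨⟨g.1.1 ∘ Fin.castSucc,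
      by simpa using g.1.2.1,
      g.2,
      fun i => by
        have := g.1.2.2.2 i.castSucc
        rwa [Fin.succ_castSucc] at this⟩,
     ⟨by
        have := g.1.2.2.2 (Fin.last k)
        rwa [g.2, Fin.succ_last, g.1.2.2.1] at this⟩⟩
  invFun gp :=
    ⟨⟨Fin.snoc gp.1.1 t,
      by
        rw [show (0 : Fin (k+2)) = Fin.castSucc 0 from rfl, Fin.snoc_castSucc]
        exact gp.1.2.1,
      by simp,
      fun i => by
        induction i using Fin.lastCases with
        | last =>
          simp only [Fin.succ_last, Fin.snoc_last, Fin.snoc_castSucc, gp.1.2.2.1]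
          exact gp.2.down
        | cast j =>
          simp only [Fin.succ_castSucc, Fin.snoc_castSucc]
          exact gp.1.2.2.2 j⟩,
     by
      simp only [Fin.snoc_castSucc]
      exact gp.1.2.2.1⟩
  left_inv g := by
    obtain ⟨⟨g, hg⟩, hu⟩ := g
    apply Subtype.ext
    apply Subtype.ext
    funext i
    induction i using Fin.lastCases with
    | last =>
      simp only [Fin.snoc_last]
      exact hg.2.1.symm
    | cast j =>
      simp only [Fin.snoc_castSucc, Function.comp_apply]
  right_inv gp := by
    obtain ⟨⟨g, hg⟩, hr⟩ := gp
    refine Prod.ext ?_ (Subsingleton.elim _ _)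
    apply Subtype.ext
    funext i
    simp only [Function.comp_apply, Fin.snoc_castSucc]

lemma card_Q8 : ∀ k s t, Nat.card (Q8 k s t) = pcount k s t := by
  intro k
  induction k with
  | zero =>
    intro s t
    show _ = if s = t then 1 else 0
    by_cases h : s = t
    · rw [if_pos h]
      subst h
      haveI : Nonempty (Q8 0 s s) := ⟨⟨fun _ => s, rfl, rfl, fun i => i.elim0⟩⟩
      haveI : Subsingleton (Q8 0 s s) := ⟨by
        rintro ⟨g, hg⟩ ⟨g', hg'⟩
        apply Subtype.ext
        funext i
        show g i = g' i
        rw [show i = 0 from Fin.ext (by omega), hg.1, hg'.1]⟩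
      exact Nat.card_unique
    · rw [if_neg h]
      haveI : IsEmpty (Q8 0 s t) := ⟨by
        rintro ⟨g, hg⟩
        exact h (by rw [← hg.1, ← hg.2.1]; rfl)⟩
      exact Nat.card_of_isEmpty
  | succ k ih =>
    intro s t
    show _ = ∑ u : S8, pcount k s u * (if Rel8 u t then 1 else 0)
    rw [← Nat.card_congr (Equiv.sigmaFiberEquiv
      (fun g : Q8 (k+1) s t => g.1 ((Fin.last k).castSucc))), natCard_sigma]
    refine Finset.sum_congr rfl fun u _ => ?_
    rw [Nat.card_congr (Q8succEquiv k s t u), Nat.card_prod, ih, card_plift_prop]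

/-! ### Cycles to paths -/

def cycFiberEquiv (n : ℕ) [NeZero n] (hn : 3 ≤ n) (s : S8) :
    {f : {f : ZMod n → S8 // ∀ i, Rel8 (f i) (f (i+1))} // f.1 0 = s} ≃ Q8 n s s where
  toFun f :=
    ⟨fun i : Fin (n+1) => f.1.1 ((i.val : ZMod n)),
     by simp only [Fin.val_zero, Nat.cast_zero]; exact f.2,
     by simp only [Fin.val_last, ZMod.natCast_self]; exact f.2,
     fun i => by
      simp only [Fin.coe_castSucc, Fin.val_succ, Nat.cast_add, Nat.cast_one]
      exact f.1.2 _⟩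
  invFun g :=
    ⟨⟨fun j => g.1 ⟨j.val, (ZMod.val_lt j).trans (Nat.lt_succ_self n)⟩,
      by
        intro j
        haveI : Fact (1 < n) := ⟨by omega⟩
        have hjlt : j.val < n := ZMod.val_lt j
        change Rel8 (g.1 ⟨j.val, (ZMod.val_lt j).trans (Nat.lt_succ_self n)⟩)
          (g.1 ⟨(j+1).val, (ZMod.val_lt (j+1)).trans (Nat.lt_succ_self n)⟩)
        have trans := g.2.2.2 ⟨j.val, hjlt⟩
        by_cases h : j.val + 1 < n
        · have hv : (j + 1).val = j.val + 1 := by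
            rw [ZMod.val_add_of_lt (by rw [ZMod.val_one]; omega), ZMod.val_one]
          have e : (⟨(j+1).val, (ZMod.val_lt (j+1)).trans (Nat.lt_succ_self n)⟩ : Fin (n+1))
              = Fin.succ ⟨j.val, hjlt⟩ := Fin.ext (by simpa using hv)
          rw [e]
          convert trans using 3
          rfl
        · have hn' : j.val + 1 = n := by omega
          have hv0 : (j + 1).val = 0 := by
            rw [ZMod.val_add, ZMod.val_one, hn', Nat.mod_self]
          have e : g.1 ⟨(j+1).val, (ZMod.val_lt (j+1)).trans (Nat.lt_succ_self n)⟩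
              = g.1 (Fin.succ ⟨j.val, hjlt⟩) := by
            have e1 : (⟨(j+1).val, (ZMod.val_lt (j+1)).trans (Nat.lt_succ_self n)⟩ : Fin (n+1))
                = 0 := Fin.ext hv0
            have e2 : Fin.succ (⟨j.val, hjlt⟩ : Fin n) = Fin.last n := Fin.ext (by simpa using hn')
            rw [e1, e2, g.2.1, g.2.2.1]
          rw [e]
          convert trans using 3
          rfl⟩,
      by
        show g.1 ⟨(0 : ZMod n).val, (ZMod.val_lt 0).trans (Nat.lt_succ_self n)⟩ = s
        have e : (⟨(0 : ZMod n).val, (ZMod.val_lt 0).trans (Nat.lt_succ_self n)⟩ : Fin (n+1))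
            = 0 := Fin.ext (ZMod.val_zero)
        rw [e]
        exact g.2.1⟩
  left_inv f := by
    apply Subtype.ext
    apply Subtype.ext
    funext j
    show f.1.1 _ = f.1.1 j
    exact congrArg f.1.1 (by simp [ZMod.natCast_val, ZMod.cast_id])
  right_inv g := by
    apply Subtype.ext
    funext i
    show g.1 ⟨((i.val : ZMod n)).val, (ZMod.val_lt _).trans (Nat.lt_succ_self n)⟩ = g.1 i
    by_cases h : i.val < n
    · exact congrArg g.1 (Fin.ext (by simp [ZMod.val_natCast, Nat.mod_eq_of_lt h]))
    · have hi : i.val = n := by omega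
      have e : (⟨((i.val : ZMod n)).val, (ZMod.val_lt _).trans (Nat.lt_succ_self n)⟩ : Fin (n+1))
          = 0 := Fin.ext (by simp [ZMod.val_natCast, hi])
      rw [e, g.2.1, show i = Fin.last n from Fin.ext hi, g.2.2.1]

/-! ### Words to cycles -/

def WordCond (n : ℕ) (x : ZMod n → Bool) : Prop :=
  (∀ i, ¬(x i = true ∧ x (i+1) = true)) ∧ (∀ i, x i = true ∨ x (i+1) = true ∨ x (i+2) = true)

def wordCycEquiv (n : ℕ) :
    {x : ZMod n → Bool // WordCond n x} ≃ {f : ZMod n → S8 // ∀ i, Rel8 (f i) (f (i+1))} where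
  toFun x :=
    ⟨fun i => ⟨(x.1 i, x.1 (i+1)), by
        intro hc
        rw [Prod.mk.injEq] at hc
        exact x.2.1 i ⟨hc.1, hc.2⟩⟩,
     fun i => by
      constructor
      · rfl
      · rintro ⟨h0, h1, h2⟩
        simp only at h0 h1 h2
        rcases x.2.2 i with h | h | h
        · rw [h0] at h; exact absurd h (by simp)
        · rw [h1] at h; exact absurd h (by simp)
        · rw [show i + 2 = i + 1 + 1 by ring, h2] at h
          exact absurd h (by simp)⟩
  invFun f :=
    ⟨fun i => (f.1 i).1.1, by
      constructor
      · rintro i ⟨h1, h2⟩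
        simp only at h1 h2
        apply (f.1 i).2
        have hsnd : (f.1 i).1.2 = (f.1 (i+1)).1.1 := (f.2 i).1
        have hpp : (f.1 i).1 = ((f.1 i).1.1, (f.1 i).1.2) := rfl
        rw [hpp, h1, hsnd, h2]
      · intro i
        by_contra hc
        push_neg at hc
        obtain ⟨h0, h1, h2⟩ := hc
        apply (f.2 i).2
        refine ⟨by simpa using h0, ?_, ?_⟩
        · rw [(f.2 i).1]; simpa using h1
        · rw [(f.2 (i+1)).1, show i + 1 + 1 = i + 2 by ring]; simpa using h2⟩
  left_inv x := by
    apply Subtype.ext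
    funext i
    rfl
  right_inv f := by
    apply Subtype.ext
    funext i
    apply Subtype.ext
    apply Prod.ext
    · rfl
    · exact ((f.2 i).1).symm

/-! ### Maximal independent sets are the valid words -/

lemma adj_iff (n : ℕ) (hn : 3 ≤ n) (v w : ZMod n) :
    (cycleGraph n).Adj v w ↔ (v = w + 1 ∨ w = v + 1) := by
  haveI : Fact (1 < n) := ⟨by omega⟩
  rw [cycleGraph, SimpleGraph.fromRel_adj]
  constructor
  · rintro ⟨_, h⟩; exact h
  · intro h
    refine ⟨?_, h⟩
    rintro rfl
    rcases h with h | h <;> exact one_ne_zero (left_eq_add.mp h)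

lemma mis_iff (n : ℕ) (hn : 3 ≤ n) (W : Set (ZMod n)) :
    MaxIndepSet (cycleGraph n) W ↔
      ((∀ i, ¬(i ∈ W ∧ i + 1 ∈ W)) ∧ (∀ i, i ∈ W ∨ i + 1 ∈ W ∨ i + 2 ∈ W)) := by
  constructor
  · rintro ⟨hind, hmax⟩
    constructor
    · rintro i ⟨h1, h2⟩
      exact hind h1 h2 ((adj_iff n hn _ _).mpr (Or.inr rfl))
    · intro i
      by_contra hc
      push_neg at hc
      obtain ⟨h0, h1, h2⟩ := hc
      have hW' : ∀ ⦃v⦄, v ∈ W ∪ {i+1} → ∀ ⦃w⦄, w ∈ W ∪ {i+1} → ¬ (cycleGraph n).Adj v w := by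
        intro v hv w hw hadj
        rcases hv with hv | hv <;> rcases hw with hw | hw
        · exact hind hv hw hadj
        · rw [Set.mem_singleton_iff] at hw; subst hw
          rcases (adj_iff n hn _ _).mp hadj with he | he
          · exact h2 (by rwa [show i + 2 = v from by rw [he]; ring])
          · have hvi : v = i := add_right_cancel he.symm
            exact h0 (hvi ▸ hv)
        · rw [Set.mem_singleton_iff] at hv; subst hv
          rcases (adj_iff n hn _ _).mp hadj with he | he
          · have hwi : w = i := (add_right_cancel he).symm
            exact h0 (hwi ▸ hw)
          · exact h2 (by rwa [show i + 2 = w from by rw [he]; ring])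
        · rw [Set.mem_singleton_iff] at hv hw; subst hv; subst hw
          exact (cycleGraph n).loopless.irrefl _ hadj
      have heq := hmax (W ∪ {i+1}) hW' Set.subset_union_left
      exact h1 (heq ▸ (Set.mem_union_right W rfl))
  · rintro ⟨no11, dom⟩
    constructor
    · intro v hv w hw hadj
      rcases (adj_iff n hn v w).mp hadj with he | he
      · exact no11 w ⟨hw, by rwa [← he]⟩
      · exact no11 v ⟨hv, by rwa [← he]⟩
    · intro W' hW' hsub
      refine Set.Subset.antisymm ?_ hsub
      intro v hv
      by_contra hvW
      rcases dom (v - 1) with h | h | h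
      · exact hW' hv (hsub h) ((adj_iff n hn _ _).mpr (Or.inl (by ring)))
      · exact hvW (by rwa [show v - 1 + 1 = v by ring] at h)
      · rw [show v - 1 + 2 = v + 1 by ring] at h
        exact hW' hv (hsub h) ((adj_iff n hn _ _).mpr (Or.inr rfl))

noncomputable def toBool8 {n : ℕ} (W : Set (ZMod n)) : ZMod n → Bool :=
  fun i => @ite Bool (i ∈ W) (Classical.propDecidable _) true false

lemma toBool8_iff {n : ℕ} (W : Set (ZMod n)) (i : ZMod n) : toBool8 W i = true ↔ i ∈ W := by
  unfold toBool8
  by_cases h : i ∈ W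
  · rw [if_pos h]; simpa using h
  · rw [if_neg h]; simpa using h

noncomputable def misWordEquiv (n : ℕ) (hn : 3 ≤ n) :
    {W : Set (ZMod n) // MaxIndepSet (cycleGraph n) W} ≃ {x : ZMod n → Bool // WordCond n x} where
  toFun W :=
    ⟨toBool8 W.1, by
      obtain ⟨hind, hdom⟩ := (mis_iff n hn W.1).mp W.2
      constructor
      · rintro i ⟨h1, h2⟩
        exact hind i ⟨(toBool8_iff _ _).mp h1, (toBool8_iff _ _).mp h2⟩
      · intro i
        rcases hdom i with h | h | h
        · exact Or.inl ((toBool8_iff _ _).mpr h)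
        · exact Or.inr (Or.inl ((toBool8_iff _ _).mpr h))
        · exact Or.inr (Or.inr ((toBool8_iff _ _).mpr h))⟩
  invFun x :=
    ⟨{i | x.1 i = true}, (mis_iff n hn _).mpr ⟨x.2.1, x.2.2⟩⟩
  left_inv W := by
    apply Subtype.ext
    ext i
    exact toBool8_iff W.1 i
  right_inv x := by
    apply Subtype.ext
    funext i
    show toBool8 {j | x.1 j = true} i = x.1 i
    by_cases h : x.1 i = true
    · rw [(toBool8_iff {j | x.1 j = true} i).mpr h, h]
    · have hne : ¬ (i ∈ {j | x.1 j = true}) := h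
      unfold toBool8
      rw [if_neg hne]
      simp only [Bool.not_eq_true] at h
      rw [h]

theorem stmt8 (n : ℕ) (hn : 3 ≤ n) :
    {W : Set (ZMod n) | MaxIndepSet (cycleGraph n) W}.ncard = perrin n := by
  haveI : NeZero n := ⟨by omega⟩
  rw [← Nat.card_coe_set_eq]
  have hcoe : Nat.card {W : Set (ZMod n) | MaxIndepSet (cycleGraph n) W}
      = Nat.card {W : Set (ZMod n) // MaxIndepSet (cycleGraph n) W} := rfl
  rw [hcoe, Nat.card_congr (misWordEquiv n hn), Nat.card_congr (wordCycEquiv n),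
    ← Nat.card_congr (Equiv.sigmaFiberEquiv
      (fun f : {f : ZMod n → S8 // ∀ i, Rel8 (f i) (f (i+1))} => f.1 0)),
    natCard_sigma, ← ccount_eq_perrin n]
  unfold ccount
  exact Finset.sum_congr rfl fun s _ => by
    rw [Nat.card_congr (cycFiberEquiv n hn s), card_Q8]
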